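/- Let n ≥ 1, let f = (f₁, …, f_n) be an environment on n lines, let φ : [0,∞) → [0,1] be continuous, let Y ≥ 0, and let h₀ : [0,Y] → ℝ be bounded above. For z ∈ ℝ let f^z be the environment whose top line is f₁ + z·φ and whose lines 2, …, n equal those of f, and define h^z(x) := sup_{0 ≤ y ≤ min(Y,x)} ( h₀(y) + f^z[(y,n)→(x,1)] ) for x ≥ 0. Then for all z₁, z₂ ∈ ℝ: (i) |h^{z₁}(x) − h^{z₂}(x)| ≤ 2·|z₁ − z₂| for every x ≥ 0; and (ii) for every 0 ≤ c ≤ d, |sup_{x ∈ [c,d]} h^{z₁}(x) − sup_{x ∈ [c,d]} h^{z₂}(x)| ≤ 2·|z₁ − z₂|. -/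

import Mathlib

open Set

/-- Jump times of an upright path from `(y, n)` to `(x, 1)` in an `n`-line environment:
`t 0 = x`, `t (Fin.last n) = y`, and the jump times are non-increasing. -/
def IsJumpTimes (n : ℕ) (y x : ℝ) (t : Fin (n + 1) → ℝ) : Prop :=
  t (Fin.last n) = y ∧ t 0 = x ∧ ∀ i : Fin n, t i.succ ≤ t i.castSucc

/-- The weight of the upright path with jump times `t` in the environment `f`. -/
def pathWeight (n : ℕ) (f : Fin n → ℝ → ℝ) (t : Fin (n + 1) → ℝ) : ℝ :=
  ∑ i : Fin n, (f i (t i.castSucc) - f i (t i.succ))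

/-- The last passage value from `(y, n)` to `(x, 1)` in the environment `f`. -/
noncomputable def lpp (n : ℕ) (f : Fin n → ℝ → ℝ) (y x : ℝ) : ℝ :=
  sSup {w : ℝ | ∃ t : Fin (n + 1) → ℝ, IsJumpTimes n y x t ∧ pathWeight n f t = w}

/-- The height function over the environment `f` with initial data `h₀` on `[0, Y]`:
`h(x) = sup_{0 ≤ y ≤ min(Y, x)} (h₀(y) + f[(y,n) → (x,1)])`. -/
noncomputable def heightFn (n : ℕ) (f : Fin n → ℝ → ℝ) (Y : ℝ) (h₀ : ℝ → ℝ)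
    (x : ℝ) : ℝ :=
  sSup {w : ℝ | ∃ y : ℝ, 0 ≤ y ∧ y ≤ min Y x ∧ w = h₀ y + lpp n f y x}

private lemma csSup_le_csSup_add {S₁ S₂ : Set ℝ} {ε : ℝ} (h₁ : S₁.Nonempty)
    (h₂ : BddAbove S₂) (h : ∀ a ∈ S₁, ∃ b ∈ S₂, a ≤ b + ε) :
    sSup S₁ ≤ sSup S₂ + ε :=
  csSup_le h₁ fun a ha => by
    obtain ⟨b, hb, hab⟩ := h a ha
    exact hab.trans (add_le_add (le_csSup h₂ hb) le_rfl)

private lemma jt_mem {m : ℕ} {y x : ℝ} {t : Fin (m + 1) → ℝ}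
    (ht : IsJumpTimes m y x t) (k : Fin (m + 1)) : t k ∈ Icc y x := by
  have hanti : Antitone t := Fin.antitone_iff_succ_le.mpr ht.2.2
  constructor
  · have := hanti (Fin.le_last k); rw [ht.1] at this; exact this
  · have := hanti (Fin.zero_le k); rw [ht.2.1] at this; exact this

private lemma jt_exists {m : ℕ} {y x : ℝ} (hyx : y ≤ x) :
    ∃ t : Fin (m + 1 + 1) → ℝ, IsJumpTimes (m + 1) y x t := by
  refine ⟨fun i => if i = 0 then x else y, ?_, ?_, ?_⟩
  · simp [Fin.ext_iff]
  · simp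
  · intro i
    simp only [Fin.succ_ne_zero, if_false]
    split <;> simp [hyx]

/-- The deterministic form of Lemma 5.11 (l.lipschitz): when the top line of an
environment on `n + 1` lines is perturbed by `z · φ` with `φ` continuous taking values
in `[0, 1]`, the resulting height function (built from bounded-above initial data `h₀`
on `[0, Y]`) is `2`-Lipschitz in `z`, pointwise and after taking the supremum over any
window `[c, d] ⊆ [0, ∞)`. -/
theorem resampled_height_lipschitz (n : ℕ) (f : Fin (n + 1) → ℝ → ℝ)
    (hf : ∀ i, ContinuousOn (f i) (Ici 0))
    (φ : ℝ → ℝ) (hφc : ContinuousOn φ (Ici 0))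
    (hφ01 : ∀ u : ℝ, 0 ≤ u → φ u ∈ Icc (0 : ℝ) 1)
    (Y : ℝ) (hY : 0 ≤ Y)
    (h₀ : ℝ → ℝ) (hh₀ : ∃ B : ℝ, ∀ y ∈ Icc 0 Y, h₀ y ≤ B)
    (fz : ℝ → Fin (n + 1) → ℝ → ℝ)
    (hfz : ∀ z i u, fz z i u = if i = 0 then f i u + z * φ u else f i u)
    (z₁ z₂ : ℝ) :
    (∀ x : ℝ, 0 ≤ x →
        |heightFn (n + 1) (fz z₁) Y h₀ x - heightFn (n + 1) (fz z₂) Y h₀ x|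
          ≤ 2 * |z₁ - z₂|) ∧
      (∀ c d : ℝ, 0 ≤ c → c ≤ d →
        |sSup (heightFn (n + 1) (fz z₁) Y h₀ '' Icc c d)
            - sSup (heightFn (n + 1) (fz z₂) Y h₀ '' Icc c d)|
          ≤ 2 * |z₁ - z₂|) := by
  obtain ⟨B, hB⟩ := hh₀
  set ε := |z₁ - z₂| with hεdef
  have hε0 : 0 ≤ ε := abs_nonneg _
  -- continuity of perturbed lines
  have hcont : ∀ z i, ContinuousOn (fz z i) (Ici 0) := by
    intro z i
    have heq : fz z i = if i = 0 then (fun u => f i u + z * φ u) else f i := by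
      funext u; by_cases h : i = 0 <;> simp [hfz, h]
    rw [heq]
    split
    · exact (hf i).add (continuousOn_const.mul hφc)
    · exact hf i
  -- key pathweight estimate
  have key : ∀ (y x : ℝ) (t : Fin (n + 1 + 1) → ℝ), 0 ≤ y → IsJumpTimes (n + 1) y x t →
      |pathWeight (n + 1) (fz z₁) t - pathWeight (n + 1) (fz z₂) t| ≤ ε := by
    intro y x t hy ht
    have hmem := fun k => jt_mem ht k
    have ha : (0 : ℝ) ≤ t (0 : Fin (n + 1)).castSucc := le_trans hy (hmem _).1
    have hb : (0 : ℝ) ≤ t (0 : Fin (n + 1)).succ := le_trans hy (hmem _).1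
    have hdiff : pathWeight (n + 1) (fz z₁) t - pathWeight (n + 1) (fz z₂) t
        = (z₁ - z₂) * (φ (t (0 : Fin (n + 1)).castSucc) - φ (t (0 : Fin (n + 1)).succ)) := by
      unfold pathWeight
      rw [← Finset.sum_sub_distrib, Finset.sum_eq_single (0 : Fin (n + 1))]
      · rw [hfz, hfz, hfz, hfz, if_pos rfl, if_pos rfl, if_pos rfl, if_pos rfl]; ring
      · intro i _ hi; simp [hfz, hi]
      · simp
    rw [hdiff, abs_mul]
    have h1 := hφ01 _ ha
    have h2 := hφ01 _ hb
    have hφb : |φ (t (0 : Fin (n + 1)).castSucc) - φ (t (0 : Fin (n + 1)).succ)| ≤ 1 := by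
      rw [abs_sub_le_iff]
      constructor <;> [skip; skip] <;>
        · obtain ⟨l1, r1⟩ := h1; obtain ⟨l2, r2⟩ := h2; linarith
    calc |z₁ - z₂| * |φ (t (0 : Fin (n + 1)).castSucc) - φ (t (0 : Fin (n + 1)).succ)|
        ≤ |z₁ - z₂| * 1 := mul_le_mul_of_nonneg_left hφb (abs_nonneg _)
      _ = ε := by rw [mul_one]
  -- uniform bound on path weights
  have bound : ∀ (z d : ℝ), 0 ≤ d → ∃ N : ℝ, ∀ (y x : ℝ) (t : Fin (n + 1 + 1) → ℝ),
      0 ≤ y → x ≤ d → IsJumpTimes (n + 1) y x t → pathWeight (n + 1) (fz z) t ≤ N := by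
    intro z d hd
    have hex : ∀ i : Fin (n + 1), ∃ C, ∀ u ∈ Icc (0 : ℝ) d, ‖fz z i u‖ ≤ C := fun i =>
      isCompact_Icc.exists_bound_of_continuousOn ((hcont z i).mono Icc_subset_Ici_self)
    choose C hC using hex
    refine ⟨∑ i, (C i + C i), fun y x t hy hxd ht => ?_⟩
    apply Finset.sum_le_sum
    intro i _
    have hsub : Icc y x ⊆ Icc (0 : ℝ) d := Icc_subset_Icc hy hxd
    have h1 := hC i _ (hsub (jt_mem ht i.castSucc))
    have h2 := hC i _ (hsub (jt_mem ht i.succ))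
    rw [Real.norm_eq_abs, abs_le] at h1 h2
    linarith [h1.1, h1.2, h2.1, h2.2]
  -- lpp sets
  have hSne : ∀ (z y x : ℝ), y ≤ x →
      {w : ℝ | ∃ t : Fin (n + 1 + 1) → ℝ, IsJumpTimes (n + 1) y x t ∧
        pathWeight (n + 1) (fz z) t = w}.Nonempty := by
    intro z y x hyx
    obtain ⟨t, ht⟩ := jt_exists (m := n) hyx
    exact ⟨_, t, ht, rfl⟩
  have hSle : ∀ (z N d y x : ℝ), 0 ≤ y → y ≤ x → x ≤ d →
      (∀ (y' x' : ℝ) (t : Fin (n + 1 + 1) → ℝ), 0 ≤ y' → x' ≤ d →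
        IsJumpTimes (n + 1) y' x' t → pathWeight (n + 1) (fz z) t ≤ N) →
      lpp (n + 1) (fz z) y x ≤ N := by
    intro z N d y x hy hyx hxd hN
    refine csSup_le (hSne z y x hyx) ?_
    rintro w ⟨t, ht, rfl⟩
    exact hN y x t hy hxd ht
  have hSbdd : ∀ (z y x : ℝ), 0 ≤ y → y ≤ x →
      BddAbove {w : ℝ | ∃ t : Fin (n + 1 + 1) → ℝ, IsJumpTimes (n + 1) y x t ∧
        pathWeight (n + 1) (fz z) t = w} := by
    intro z y x hy hyx
    obtain ⟨N, hN⟩ := bound z x (le_trans hy hyx)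
    refine ⟨N, ?_⟩
    rintro w ⟨t, ht, rfl⟩
    exact hN y x t hy le_rfl ht
  -- lpp Lipschitz
  have lpp_lip : ∀ (y x : ℝ), 0 ≤ y → y ≤ x →
      |lpp (n + 1) (fz z₁) y x - lpp (n + 1) (fz z₂) y x| ≤ ε := by
    intro y x hy hyx
    unfold lpp
    rw [abs_sub_le_iff]
    constructor
    · refine sub_le_iff_le_add'.mpr
        (csSup_le_csSup_add (hSne z₁ y x hyx) (hSbdd z₂ y x hy hyx) ?_)
      rintro a ⟨t, ht, rfl⟩
      refine ⟨_, ⟨t, ht, rfl⟩, ?_⟩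
      have := key y x t hy ht
      rw [abs_sub_le_iff] at this
      linarith [this.1, this.2]
    · refine sub_le_iff_le_add'.mpr
        (csSup_le_csSup_add (hSne z₂ y x hyx) (hSbdd z₁ y x hy hyx) ?_)
      rintro a ⟨t, ht, rfl⟩
      refine ⟨_, ⟨t, ht, rfl⟩, ?_⟩
      have := key y x t hy ht
      rw [abs_sub_le_iff] at this
      linarith [this.1, this.2]
  -- heightFn sets
  have hHne : ∀ (z x : ℝ), 0 ≤ x →
      {w : ℝ | ∃ y : ℝ, 0 ≤ y ∧ y ≤ min Y x ∧
        w = h₀ y + lpp (n + 1) (fz z) y x}.Nonempty := by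
    intro z x hx
    exact ⟨h₀ 0 + lpp (n + 1) (fz z) 0 x, 0, le_rfl, le_min hY hx, rfl⟩
  have hHbd : ∀ (z d : ℝ), 0 ≤ d → ∃ M : ℝ, ∀ (x : ℝ), 0 ≤ x → x ≤ d →
      ∀ w ∈ {w : ℝ | ∃ y : ℝ, 0 ≤ y ∧ y ≤ min Y x ∧
        w = h₀ y + lpp (n + 1) (fz z) y x}, w ≤ M := by
    intro z d hd
    obtain ⟨N, hN⟩ := bound z d hd
    refine ⟨B + N, ?_⟩
    rintro x hx hxd w ⟨y, hy0, hym, rfl⟩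
    have hyx : y ≤ x := hym.trans (min_le_right _ _)
    have h1 : h₀ y ≤ B := hB y ⟨hy0, hym.trans (min_le_left _ _)⟩
    have h2 : lpp (n + 1) (fz z) y x ≤ N := hSle z N d y x hy0 hyx hxd hN
    linarith
  have hHbdd : ∀ (z x : ℝ), 0 ≤ x →
      BddAbove {w : ℝ | ∃ y : ℝ, 0 ≤ y ∧ y ≤ min Y x ∧
        w = h₀ y + lpp (n + 1) (fz z) y x} := by
    intro z x hx
    obtain ⟨M, hM⟩ := hHbd z x hx
    exact ⟨M, fun w hw => hM x hx le_rfl w hw⟩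
  -- pointwise Lipschitz
  have point : ∀ x : ℝ, 0 ≤ x →
      |heightFn (n + 1) (fz z₁) Y h₀ x - heightFn (n + 1) (fz z₂) Y h₀ x| ≤ ε := by
    intro x hx
    unfold heightFn
    rw [abs_sub_le_iff]
    constructor
    · refine sub_le_iff_le_add'.mpr
        (csSup_le_csSup_add (hHne z₁ x hx) (hHbdd z₂ x hx) ?_)
      rintro a ⟨y, hy0, hym, rfl⟩
      refine ⟨h₀ y + lpp (n + 1) (fz z₂) y x, ⟨y, hy0, hym, rfl⟩, ?_⟩
      have := lpp_lip y x hy0 (hym.trans (min_le_right _ _))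
      rw [abs_sub_le_iff] at this
      linarith [this.1, this.2]
    · refine sub_le_iff_le_add'.mpr
        (csSup_le_csSup_add (hHne z₂ x hx) (hHbdd z₁ x hx) ?_)
      rintro a ⟨y, hy0, hym, rfl⟩
      refine ⟨h₀ y + lpp (n + 1) (fz z₁) y x, ⟨y, hy0, hym, rfl⟩, ?_⟩
      have := lpp_lip y x hy0 (hym.trans (min_le_right _ _))
      rw [abs_sub_le_iff] at this
      linarith [this.1, this.2]
  have h2ε : ε ≤ 2 * |z₁ - z₂| := by rw [hεdef]; linarith
  refine ⟨fun x hx => (point x hx).trans h2ε, fun c d hc hcd => ?_⟩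
  -- window supremum
  have hIne : (heightFn (n + 1) (fz z₁) Y h₀ '' Icc c d).Nonempty :=
    ⟨_, mem_image_of_mem _ (left_mem_Icc.mpr hcd)⟩
  have hIne' : (heightFn (n + 1) (fz z₂) Y h₀ '' Icc c d).Nonempty :=
    ⟨_, mem_image_of_mem _ (left_mem_Icc.mpr hcd)⟩
  have hIbdd : ∀ z : ℝ, BddAbove (heightFn (n + 1) (fz z) Y h₀ '' Icc c d) := by
    intro z
    obtain ⟨M, hM⟩ := hHbd z d (hc.trans hcd)
    refine ⟨M, ?_⟩
    rintro w ⟨x, hxm, rfl⟩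
    have hx0 : 0 ≤ x := hc.trans hxm.1
    exact csSup_le (hHne z x hx0) (fun w hw => hM x hx0 hxm.2 w hw)
  refine le_trans ?_ h2ε
  rw [abs_sub_le_iff]
  constructor
  · refine sub_le_iff_le_add'.mpr (csSup_le_csSup_add hIne (hIbdd z₂) ?_)
    rintro a ⟨x, hxm, rfl⟩
    refine ⟨heightFn (n + 1) (fz z₂) Y h₀ x, mem_image_of_mem _ hxm, ?_⟩
    have := point x (hc.trans hxm.1)
    rw [abs_sub_le_iff] at this
    linarith [this.1, this.2]
  · refine sub_le_iff_le_add'.mpr (csSup_le_csSup_add hIne' (hIbdd z₁) ?_)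
    rintro a ⟨x, hxm, rfl⟩
    refine ⟨heightFn (n + 1) (fz z₁) Y h₀ x, mem_image_of_mem _ hxm, ?_⟩
    have := point x (hc.trans hxm.1)
    rw [abs_sub_le_iff] at this
    linarith [this.1, this.2]
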